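/- Vertical parity is preserved by the horizontal update: if c is a configuration such that every pair of signals (cells with state ≥ 4) lies at even vertical distance (i.e., for all signals x, y, the second coordinate of x - y is even), then F(c,H) has the same property. -/
import Mathlib


inductive Letter | H | V
deriving DecidableEq, BEq

/-- Horizontal neighborhood `N_h(x) = {x, x+(1,0), x-(1,0)}`. -/
def Nh (x : ℤ × ℤ) : Finset (ℤ × ℤ) := {x, x + (1, 0), x - (1, 0)}

/-- Vertical neighborhood `N_v(x) = {x, x+(0,1), x-(0,1)}`. -/
def Nv (x : ℤ × ℤ) : Finset (ℤ × ℤ) := {x, x + (0, 1), x - (0, 1)}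

/-- The horizontal update of the fungal automaton. -/
def upH (c : ℤ × ℤ → ℤ) (x : ℤ × ℤ) : ℤ :=
  c x - 2 * (if 4 ≤ c x then 1 else 0) + ∑ y ∈ Nh x, (if 4 ≤ c y then 1 else 0)

/-- The vertical update of the fungal automaton. -/
def upV (c : ℤ × ℤ → ℤ) (x : ℤ × ℤ) : ℤ :=
  c x - 2 * (if 4 ≤ c x then 1 else 0) + ∑ y ∈ Nv x, (if 4 ≤ c y then 1 else 0)

lemma upH_signal_row (c : ℤ × ℤ → ℤ) (hrange : ∀ x, 0 ≤ c x ∧ c x ≤ 5) {x : ℤ × ℤ}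
    (h : 4 ≤ upH c x) : ∃ z, 4 ≤ c z ∧ z.2 = x.2 := by
  by_cases h1 : 4 ≤ c x
  · exact ⟨x, h1, rfl⟩
  by_cases h2 : 4 ≤ c (x + (1, 0))
  · exact ⟨_, h2, by simp⟩
  by_cases h3 : 4 ≤ c (x - (1, 0))
  · exact ⟨_, h3, by simp⟩
  exfalso
  have hsum : ∑ y ∈ Nh x, (if 4 ≤ c y then (1:ℤ) else 0) = 0 := by
    apply Finset.sum_eq_zero
    intro y hy
    simp only [Nh, Finset.mem_insert, Finset.mem_singleton] at hy
    rcases hy with rfl | rfl | rfl <;> simp [h1, h2, h3]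
  have := hrange x
  simp only [upH, hsum, if_neg h1] at h
  omega

/-- The vertical parity property is preserved by the horizontal update. -/
theorem stmt5 (c : ℤ × ℤ → ℤ) (hrange : ∀ x, 0 ≤ c x ∧ c x ≤ 5)
    (hvpp : ∀ x y : ℤ × ℤ, 4 ≤ c x → 4 ≤ c y → (x - y).2 % 2 = 0) :
    ∀ x y : ℤ × ℤ, 4 ≤ upH c x → 4 ≤ upH c y → (x - y).2 % 2 = 0 := by
  intro x y hx hy
  obtain ⟨zx, hzx, hzx2⟩ := upH_signal_row c hrange hx
  obtain ⟨zy, hzy, hzy2⟩ := upH_signal_row c hrange hy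
  have := hvpp zx zy hzx hzy
  have e1 : (zx - zy).2 = zx.2 - zy.2 := rfl
  have e2 : (x - y).2 = x.2 - y.2 := rfl
  omega
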